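/- arXiv:1805.08266 — 2 statements merged into one kernel-verified Lean document; each statement's English description precedes it below -/
import Mathlib

section
/- Let φ: ℝ → ℝ be continuous with φ(0) = 0, |φ(y)| ≤ k|y| for all y and some k > 0, differentiable on ℝ∖{0} with |φ'| ≤ k' for some k' > 0, and such that φ' has one-sided limits φ'(0⁺) and φ'(0⁻) at 0 that are not both zero. Let (σ_{b,n}), (σ_{w,n}), (q_n) be sequences of positive reals with σ_{b,n} → 0 and q_n → 0, satisfying for each n: q_n = σ_{b,n}² + σ_{w,n}² E[φ(√(q_n) Z)²] and σ_{w,n}² E[φ'(√(q_n) Z)²] = 1. Then σ_{b,n}²/q_n → 0 and σ_{w,n}² → 2/(φ'(0⁺)² + φ'(0⁻)²). -/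
open MeasureTheory ProbabilityTheory Real Filter Topology Set
open scoped NNReal ENNReal

/-- The standard Gaussian measure `N(0,1)` on `ℝ`. -/
noncomputable def stdG : Measure ℝ := gaussianReal 0 1

instance aux_stdG_prob : IsProbabilityMeasure stdG :=
  inferInstanceAs (IsProbabilityMeasure (gaussianReal 0 1))

/- ### Auxiliary lemmas on Gaussian integrals -/

lemma aux_pdf_eq (z : ℝ) :
    gaussianPDFReal 0 1 z = (Real.sqrt (2 * π))⁻¹ * rexp (-(1/2) * z ^ 2) := by
  have h1 : ((1:ℝ≥0):ℝ) = 1 := rfl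
  simp only [gaussianPDFReal, h1, sub_zero, mul_one]
  congr 1
  ring

lemma aux_stdG_setIntegral (g : ℝ → ℝ) (s : Set ℝ) (hs : MeasurableSet s) :
    ∫ z in s, g z ∂stdG = ∫ z in s, g z * ((Real.sqrt (2 * π))⁻¹ * rexp (-(1/2) * z ^ 2)) := by
  have h1 : stdG = volume.withDensity (gaussianPDF 0 1) :=
    gaussianReal_of_var_ne_zero 0 one_ne_zero
  have h2 : gaussianPDF 0 1 = fun x => ((Real.toNNReal (gaussianPDFReal 0 1 x) : ℝ≥0) : ℝ≥0∞) := by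
    funext x; rfl
  rw [h1, h2, restrict_withDensity hs,
    integral_withDensity_eq_integral_smul ((measurable_gaussianPDFReal 0 1).real_toNNReal) g]
  congr 1
  funext z
  rw [NNReal.smul_def, smul_eq_mul, Real.coe_toNNReal _ (gaussianPDFReal_nonneg 0 1 z), aux_pdf_eq]
  ring

lemma aux_Ig_val_Ioi : ∫ x in Ioi (0:ℝ), rexp (-(1/2) * x ^ 2) = Real.sqrt (2 * π) / 2 := by
  have := integral_gaussian_Ioi (1/2)
  rw [this]; congr 1; rw [div_div_eq_mul_div, div_one]; ring_nf

lemma aux_Ig_val_Iic : ∫ x in Iic (0:ℝ), rexp (-(1/2) * x ^ 2) = Real.sqrt (2 * π) / 2 := by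
  have h := integral_comp_neg_Iic (0:ℝ) (fun x => rexp (-(1/2) * x ^ 2))
  simp only [neg_sq, neg_zero] at h
  rw [h, aux_Ig_val_Ioi]

lemma aux_stdG_Ioi_half : (stdG (Ioi (0:ℝ))).toReal = 1/2 := by
  have h1 : (stdG (Ioi (0:ℝ))).toReal = ∫ z in Ioi (0:ℝ), (1:ℝ) ∂stdG := by
    rw [setIntegral_const]; simp [measureReal_def]
  rw [h1, aux_stdG_setIntegral _ _ measurableSet_Ioi]
  simp only [one_mul]
  rw [integral_const_mul, aux_Ig_val_Ioi]
  field_simp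

lemma aux_stdG_Iic_half : (stdG (Iic (0:ℝ))).toReal = 1/2 := by
  have h1 : (stdG (Iic (0:ℝ))).toReal = ∫ z in Iic (0:ℝ), (1:ℝ) ∂stdG := by
    rw [setIntegral_const]; simp [measureReal_def]
  rw [h1, aux_stdG_setIntegral _ _ measurableSet_Iic]
  simp only [one_mul]
  rw [integral_const_mul, aux_Ig_val_Iic]
  field_simp

lemma aux_Ig_sq_int : Integrable (fun x : ℝ => x ^ 2 * rexp (-(1/2) * x ^ 2)) := by
  have h := integrable_rpow_mul_exp_neg_mul_sq (by norm_num : (0:ℝ) < 1/2) (s := 2)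
    (by norm_num)
  simpa [Real.rpow_two] using h

lemma aux_Ig_int : Integrable (fun x : ℝ => rexp (-(1/2) * x ^ 2)) :=
  integrable_exp_neg_mul_sq (by norm_num)

lemma aux_Ig_deriv (x : ℝ) :
    HasDerivAt (fun x : ℝ => -x * rexp (-(1/2) * x ^ 2))
      ((x ^ 2 - 1) * rexp (-(1/2) * x ^ 2)) x := by
  have h1 : HasDerivAt (fun x : ℝ => -(1/2) * x ^ 2) (-x) x := by
    simpa using ((hasDerivAt_pow 2 x).const_mul (-(1/2):ℝ))
  have h3 := ((hasDerivAt_id x).neg.mul h1.exp)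
  refine h3.congr_deriv ?_
  simp only [Pi.neg_apply, id_eq]
  ring

lemma aux_Ig_tendsto_top : Tendsto (fun x : ℝ => -x * rexp (-(1/2) * x ^ 2)) atTop (𝓝 0) := by
  have h := rpow_mul_exp_neg_mul_sq_isLittleO_exp_neg (by norm_num : (0:ℝ) < 1/2) 1
  have hlin : Tendsto (fun x : ℝ => -(1/2) * x) atTop atBot :=
    tendsto_id.const_mul_atTop_of_neg (by norm_num : (-(1/2):ℝ) < 0)
  have h2 : Tendsto (fun x : ℝ => rexp (-(1/2) * x)) atTop (𝓝 0) :=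
    Real.tendsto_exp_atBot.comp hlin
  have h3 : Tendsto (fun x : ℝ => x ^ (1:ℝ) * rexp (-(1/2) * x ^ 2)) atTop (𝓝 0) :=
    h.trans_tendsto h2
  have h4 : Tendsto (fun x : ℝ => x * rexp (-(1/2) * x ^ 2)) atTop (𝓝 0) := by
    simpa [Real.rpow_one] using h3
  simpa using h4.neg

lemma aux_Ig_sq_val_Ioi :
    ∫ x in Ioi (0:ℝ), x ^ 2 * rexp (-(1/2) * x ^ 2) = Real.sqrt (2 * π) / 2 := by
  have key : ∫ x in Ioi (0:ℝ), (x ^ 2 - 1) * rexp (-(1/2) * x ^ 2) = 0 := by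
    have := integral_Ioi_of_hasDerivAt_of_tendsto
      (f := fun x : ℝ => -x * rexp (-(1/2) * x ^ 2))
      (f' := fun x : ℝ => (x ^ 2 - 1) * rexp (-(1/2) * x ^ 2)) (a := 0)
      ((aux_Ig_deriv 0).continuousAt.continuousWithinAt)
      (fun x _ => aux_Ig_deriv x)
      (by
        have h0 : Integrable
            (fun x : ℝ => x ^ 2 * rexp (-(1/2) * x ^ 2) - rexp (-(1/2) * x ^ 2)) :=
          aux_Ig_sq_int.sub aux_Ig_int
        have : Integrable (fun x : ℝ => (x ^ 2 - 1) * rexp (-(1/2) * x ^ 2)) := by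
          refine h0.congr (Eventually.of_forall fun x => ?_)
          ring
        exact this.integrableOn)
      aux_Ig_tendsto_top
    simpa using this
  have hsub : ∫ x in Ioi (0:ℝ), (x ^ 2 - 1) * rexp (-(1/2) * x ^ 2)
      = (∫ x in Ioi (0:ℝ), x ^ 2 * rexp (-(1/2) * x ^ 2))
        - ∫ x in Ioi (0:ℝ), rexp (-(1/2) * x ^ 2) := by
    rw [← integral_sub aux_Ig_sq_int.integrableOn aux_Ig_int.integrableOn]
    congr 1; funext x; ring
  have := aux_Ig_val_Ioi
  linarith [key]

lemma aux_Ig_sq_val_Iic :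
    ∫ x in Iic (0:ℝ), x ^ 2 * rexp (-(1/2) * x ^ 2) = Real.sqrt (2 * π) / 2 := by
  have h := integral_comp_neg_Iic (0:ℝ) (fun x => x ^ 2 * rexp (-(1/2) * x ^ 2))
  simp only [neg_sq, neg_zero] at h
  rw [h, aux_Ig_sq_val_Ioi]

lemma aux_stdG_sq_Ioi : ∫ z in Ioi (0:ℝ), z ^ 2 ∂stdG = 1/2 := by
  rw [aux_stdG_setIntegral _ _ measurableSet_Ioi]
  have : ∀ z : ℝ, z ^ 2 * ((Real.sqrt (2 * π))⁻¹ * rexp (-(1/2) * z ^ 2))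
      = (Real.sqrt (2 * π))⁻¹ * (z ^ 2 * rexp (-(1/2) * z ^ 2)) := fun z => by ring
  simp_rw [this]
  rw [integral_const_mul, aux_Ig_sq_val_Ioi]
  field_simp

lemma aux_stdG_sq_Iic : ∫ z in Iic (0:ℝ), z ^ 2 ∂stdG = 1/2 := by
  rw [aux_stdG_setIntegral _ _ measurableSet_Iic]
  have : ∀ z : ℝ, z ^ 2 * ((Real.sqrt (2 * π))⁻¹ * rexp (-(1/2) * z ^ 2))
      = (Real.sqrt (2 * π))⁻¹ * (z ^ 2 * rexp (-(1/2) * z ^ 2)) := fun z => by ring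
  simp_rw [this]
  rw [integral_const_mul, aux_Ig_sq_val_Iic]
  field_simp

lemma aux_stdG_null : stdG {(0:ℝ)} = 0 :=
  gaussianReal_absolutelyContinuous 0 one_ne_zero (measure_singleton 0)

lemma aux_stdG_ae_ne : ∀ᵐ z ∂stdG, z ≠ (0:ℝ) := by
  rw [ae_iff]
  convert aux_stdG_null using 2
  ext z
  simp

lemma aux_integrable_sq_stdG : Integrable (fun z : ℝ => z ^ 2) stdG := by
  have h1 : stdG = volume.withDensity (gaussianPDF 0 1) :=
    gaussianReal_of_var_ne_zero 0 one_ne_zero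
  rw [h1, integrable_withDensity_iff (measurable_gaussianPDF 0 1)
    (Eventually.of_forall fun x => ENNReal.ofReal_lt_top)]
  have : ∀ x : ℝ, x ^ 2 * (gaussianPDF 0 1 x).toReal
      = (Real.sqrt (2 * π))⁻¹ * (x ^ 2 * rexp (-(1/2) * x ^ 2)) := by
    intro x
    rw [gaussianPDF, ENNReal.toReal_ofReal (gaussianPDFReal_nonneg 0 1 x), aux_pdf_eq]
    ring
  simp_rw [this]
  exact aux_Ig_sq_int.const_mul _

/- ### One-sided difference quotient limits -/

lemma aux_slope_right {φ φd : ℝ → ℝ} {dp : ℝ} (hφc : Continuous φ) (hφ0 : φ 0 = 0)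
    (hφd : ∀ x : ℝ, x ≠ 0 → HasDerivAt φ (φd x) x)
    (hdp : Tendsto φd (𝓝[>] 0) (𝓝 dp)) :
    Tendsto (fun t => φ t / t) (𝓝[>] (0:ℝ)) (𝓝 dp) := by
  rw [Metric.tendsto_nhdsWithin_nhds] at hdp ⊢
  intro ε hε
  obtain ⟨δ, hδ, H⟩ := hdp ε hε
  refine ⟨δ, hδ, fun {t} ht hd => ?_⟩
  have ht' : (0:ℝ) < t := ht
  obtain ⟨c, hc, hceq⟩ := exists_hasDerivAt_eq_slope φ φd ht'
    hφc.continuousOn (fun x hx => hφd x (ne_of_gt hx.1))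
  have heq : φ t / t = φd c := by rw [hceq, hφ0]; simp
  rw [heq]
  refine H hc.1 ?_
  rw [Real.dist_eq, sub_zero, abs_of_pos hc.1]
  calc c < t := hc.2
    _ ≤ |t - 0| := by rw [sub_zero]; exact le_abs_self t
    _ < δ := hd

lemma aux_slope_left {φ φd : ℝ → ℝ} {dm : ℝ} (hφc : Continuous φ) (hφ0 : φ 0 = 0)
    (hφd : ∀ x : ℝ, x ≠ 0 → HasDerivAt φ (φd x) x)
    (hdm : Tendsto φd (𝓝[<] 0) (𝓝 dm)) :
    Tendsto (fun t => φ t / t) (𝓝[<] (0:ℝ)) (𝓝 dm) := by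
  rw [Metric.tendsto_nhdsWithin_nhds] at hdm ⊢
  intro ε hε
  obtain ⟨δ, hδ, H⟩ := hdm ε hε
  refine ⟨δ, hδ, fun {t} ht hd => ?_⟩
  have ht' : t < 0 := ht
  obtain ⟨c, hc, hceq⟩ := exists_hasDerivAt_eq_slope φ φd ht'
    hφc.continuousOn (fun x hx => hφd x (ne_of_lt hx.2))
  have heq : φ t / t = φd c := by
    rw [hceq, hφ0, zero_sub, zero_sub, neg_div_neg_eq]
  rw [heq]
  refine H hc.2 ?_
  rw [Real.dist_eq, sub_zero, abs_of_neg hc.2]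
  calc -c < -t := by linarith [hc.1]
    _ ≤ |t - 0| := by rw [sub_zero]; exact neg_le_abs t
    _ < δ := hd

/-- If `(σ_{b,n}, σ_{w,n})` is on the edge of chaos with limiting variance `q_n`, and
`σ_{b,n} → 0`, `q_n → 0`, then `σ_{b,n}²/q_n → 0` and `σ_{w,n}² → 2/(φ'(0⁺)² + φ'(0⁻)²)`. -/
theorem stmt13 (φ φd : ℝ → ℝ) (k k' dp dm : ℝ)
    (hφc : Continuous φ) (hφ0 : φ 0 = 0)
    (hk : 0 < k) (hbnd : ∀ y : ℝ, |φ y| ≤ k * |y|)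
    (hφd : ∀ x : ℝ, x ≠ 0 → HasDerivAt φ (φd x) x)
    (hk' : 0 < k') (hdbnd : ∀ x : ℝ, x ≠ 0 → |φd x| ≤ k')
    (hdp : Tendsto φd (𝓝[>] 0) (𝓝 dp))
    (hdm : Tendsto φd (𝓝[<] 0) (𝓝 dm))
    (hne : ¬(dp = 0 ∧ dm = 0))
    (σb σw q : ℕ → ℝ)
    (hσbpos : ∀ n, 0 < σb n) (hσwpos : ∀ n, 0 < σw n) (hqpos : ∀ n, 0 < q n)
    (hσb0 : Tendsto σb atTop (𝓝 0)) (hq0 : Tendsto q atTop (𝓝 0))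
    (hfix : ∀ n, q n = (σb n) ^ 2 + (σw n) ^ 2 * ∫ z, (φ (Real.sqrt (q n) * z)) ^ 2 ∂stdG)
    (heoc : ∀ n, (σw n) ^ 2 * ∫ z, (φd (Real.sqrt (q n) * z)) ^ 2 ∂stdG = 1) :
    Tendsto (fun n => (σb n) ^ 2 / q n) atTop (𝓝 0) ∧
    Tendsto (fun n => (σw n) ^ 2) atTop (𝓝 (2 / (dp ^ 2 + dm ^ 2))) := by
  set s : ℕ → ℝ := fun n => Real.sqrt (q n) with hs_def
  have hs : ∀ n, 0 < s n := fun n => Real.sqrt_pos.mpr (hqpos n)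
  have hs_sq : ∀ n, (s n) ^ 2 = q n := fun n => Real.sq_sqrt (hqpos n).le
  have hs0 : Tendsto s atTop (𝓝 0) := by
    have := (Real.continuous_sqrt.tendsto 0).comp hq0
    simpa [hs_def, Function.comp_def] using this
  -- positivity of the limit denominator
  have hL0 : 0 < dp ^ 2 + dm ^ 2 := by
    rcases not_and_or.mp hne with h | h
    · have h1 : 0 < dp ^ 2 := by positivity
      nlinarith [sq_nonneg dm]
    · have h1 : 0 < dm ^ 2 := by positivity
      nlinarith [sq_nonneg dp]
  set L : ℝ := (dp ^ 2 + dm ^ 2) / 2 with hL_def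
  have hLpos : 0 < L := by positivity
  -- the limit functions
  set f : ℝ → ℝ := fun z => if 0 < z then dp ^ 2 else dm ^ 2 with hf_def
  set f2 : ℝ → ℝ := fun z => (if 0 < z then dp ^ 2 else dm ^ 2) * z ^ 2 with hf2_def
  have hf_piece : f = (Ioi (0:ℝ)).piecewise (fun _ => dp ^ 2) (fun _ => dm ^ 2) := by
    funext z
    by_cases h : 0 < z <;> simp [hf_def, Set.piecewise, h, mem_Ioi]
  have hf2_piece : f2 = (Ioi (0:ℝ)).piecewise (fun z => dp ^ 2 * z ^ 2)
      (fun z => dm ^ 2 * z ^ 2) := by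
    funext z
    by_cases h : 0 < z <;> simp [hf2_def, Set.piecewise, h, mem_Ioi, mul_comm]
  -- value of ∫ f
  have hIf : ∫ z, f z ∂stdG = L := by
    rw [hf_piece, integral_piecewise measurableSet_Ioi
      (integrableOn_const (measure_ne_top _ _))
      (integrableOn_const (measure_ne_top _ _))]
    rw [setIntegral_const, setIntegral_const, measureReal_def, measureReal_def, compl_Ioi, aux_stdG_Ioi_half, aux_stdG_Iic_half]
    simp only [smul_eq_mul, hL_def]
    ring
  -- value of ∫ f2
  have hIf2 : ∫ z, f2 z ∂stdG = L := by
    rw [hf2_piece, integral_piecewise measurableSet_Ioi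
      ((aux_integrable_sq_stdG.const_mul (dp ^ 2)).integrableOn)
      ((aux_integrable_sq_stdG.const_mul (dm ^ 2)).integrableOn)]
    rw [compl_Ioi, integral_const_mul, integral_const_mul, aux_stdG_sq_Ioi, aux_stdG_sq_Iic]
    simp only [hL_def]
    ring
  -- mutual convergence to the nhds-within filters
  have hszp : ∀ z : ℝ, 0 < z → Tendsto (fun n => s n * z) atTop (𝓝[>] 0) := by
    intro z hz
    rw [tendsto_nhdsWithin_iff]
    constructor
    · simpa using hs0.mul_const z
    · exact Eventually.of_forall fun n => mul_pos (hs n) hz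
  have hszm : ∀ z : ℝ, z < 0 → Tendsto (fun n => s n * z) atTop (𝓝[<] 0) := by
    intro z hz
    rw [tendsto_nhdsWithin_iff]
    constructor
    · simpa using hs0.mul_const z
    · exact Eventually.of_forall fun n => mul_neg_of_pos_of_neg (hs n) hz
  -- Limit of the derivative integrals (DCT)
  have hA : Tendsto (fun n => ∫ z, (φd (s n * z)) ^ 2 ∂stdG) atTop (𝓝 L) := by
    rw [← hIf]
    apply tendsto_integral_of_dominated_convergence (fun _ => k' ^ 2)
    · intro n
      have hmeas : Measurable fun z : ℝ => (deriv φ (s n * z)) ^ 2 :=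
        ((measurable_deriv φ).comp (measurable_const_mul (s n))).pow_const 2
      refine hmeas.aestronglyMeasurable.congr ?_
      filter_upwards [aux_stdG_ae_ne] with z hz
      have hne' : s n * z ≠ 0 := mul_ne_zero (hs n).ne' hz
      rw [(hφd _ hne').deriv]
    · exact integrable_const _
    · intro n
      filter_upwards [aux_stdG_ae_ne] with z hz
      have hne' : s n * z ≠ 0 := mul_ne_zero (hs n).ne' hz
      have := hdbnd _ hne'
      rw [Real.norm_eq_abs, abs_pow]
      calc |φd (s n * z)| ^ 2 ≤ k' ^ 2 := by nlinarith [abs_nonneg (φd (s n * z))]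
        _ = k' ^ 2 := rfl
    · filter_upwards [aux_stdG_ae_ne] with z hz
      rcases lt_or_gt_of_ne hz with hlt | hgt
      · have h1 : Tendsto (fun n => φd (s n * z)) atTop (𝓝 dm) := hdm.comp (hszm z hlt)
        have h2 := h1.pow 2
        have : f z = dm ^ 2 := by simp [hf_def, not_lt.mpr hlt.le]
        rw [this]
        exact h2
      · have h1 : Tendsto (fun n => φd (s n * z)) atTop (𝓝 dp) := hdp.comp (hszp z hgt)
        have h2 := h1.pow 2
        have : f z = dp ^ 2 := by simp [hf_def, hgt]
        rw [this]
        exact h2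
  -- Limit of φ-integrals divided by q (DCT)
  have hB : Tendsto (fun n => (∫ z, (φ (s n * z)) ^ 2 ∂stdG) / q n) atTop (𝓝 L) := by
    rw [← hIf2]
    have hrw : ∀ n, (∫ z, (φ (s n * z)) ^ 2 ∂stdG) / q n
        = ∫ z, (φ (s n * z)) ^ 2 / q n ∂stdG := fun n => (integral_div _ _).symm
    simp_rw [hrw]
    apply tendsto_integral_of_dominated_convergence (fun z => k ^ 2 * z ^ 2)
    · intro n
      exact (((hφc.comp (continuous_const.mul continuous_id)).pow 2).div_const
        (q n)).aestronglyMeasurable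
    · exact aux_integrable_sq_stdG.const_mul _
    · intro n
      refine Eventually.of_forall fun z => ?_
      have h1 : |φ (s n * z)| ≤ k * |s n * z| := hbnd _
      have h2 : (φ (s n * z)) ^ 2 ≤ k ^ 2 * (s n * z) ^ 2 := by
        nlinarith [abs_nonneg (φ (s n * z)), abs_nonneg (s n * z), sq_abs (φ (s n * z)),
          sq_abs (s n * z), mul_nonneg hk.le (abs_nonneg (s n * z))]
      have h3 : (s n * z) ^ 2 = q n * z ^ 2 := by rw [mul_pow, hs_sq]
      rw [Real.norm_eq_abs, abs_div, abs_of_nonneg (sq_nonneg _), abs_of_pos (hqpos n),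
        div_le_iff₀ (hqpos n)]
      calc (φ (s n * z)) ^ 2 ≤ k ^ 2 * (s n * z) ^ 2 := h2
        _ = k ^ 2 * z ^ 2 * q n := by rw [h3]; ring
    · filter_upwards [aux_stdG_ae_ne] with z hz
      have key : ∀ n, (φ (s n * z)) ^ 2 / q n = (φ (s n * z) / (s n * z)) ^ 2 * z ^ 2 := by
        intro n
        have hne' : s n * z ≠ 0 := mul_ne_zero (hs n).ne' hz
        have h3 : (s n * z) ^ 2 = q n * z ^ 2 := by rw [mul_pow, hs_sq]
        have hqne : q n ≠ 0 := (hqpos n).ne'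
        field_simp
        rw [hs_sq n, mul_div_assoc, div_self hqne, mul_one]
      simp_rw [key]
      rcases lt_or_gt_of_ne hz with hlt | hgt
      · have h1 : Tendsto (fun n => φ (s n * z) / (s n * z)) atTop (𝓝 dm) :=
          (aux_slope_left hφc hφ0 hφd hdm).comp (hszm z hlt)
        have h2 := (h1.pow 2).mul_const (z ^ 2)
        have : f2 z = dm ^ 2 * z ^ 2 := by simp [hf2_def, not_lt.mpr hlt.le]
        rw [this]
        exact h2
      · have h1 : Tendsto (fun n => φ (s n * z) / (s n * z)) atTop (𝓝 dp) :=
          (aux_slope_right hφc hφ0 hφd hdp).comp (hszp z hgt)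
        have h2 := (h1.pow 2).mul_const (z ^ 2)
        have : f2 z = dp ^ 2 * z ^ 2 := by simp [hf2_def, hgt]
        rw [this]
        exact h2
  -- σw² = (∫ φd²)⁻¹, so σw² → L⁻¹
  have hAinv : ∀ n, ∫ z, (φd (s n * z)) ^ 2 ∂stdG = ((σw n) ^ 2)⁻¹ := by
    intro n
    have h := heoc n
    have hσ : (σw n) ^ 2 ≠ 0 := (pow_pos (hσwpos n) 2).ne'
    field_simp at h ⊢
    rw [eq_div_iff hσ, mul_comm]; exact h
  have hA' : Tendsto (fun n => ((σw n) ^ 2)⁻¹) atTop (𝓝 L) := by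
    have := hA
    simp_rw [hAinv] at this
    exact this
  have hσw2 : Tendsto (fun n => (σw n) ^ 2) atTop (𝓝 L⁻¹) := by
    have h := hA'.inv₀ hLpos.ne'
    simp_rw [inv_inv] at h
    exact h
  have hLinv : L⁻¹ = 2 / (dp ^ 2 + dm ^ 2) := by
    rw [hL_def]
    field_simp
  constructor
  · -- σb²/q → 0
    have hkey : ∀ n, (σb n) ^ 2 / q n
        = 1 - (σw n) ^ 2 * ((∫ z, (φ (s n * z)) ^ 2 ∂stdG) / q n) := by
      intro n
      have h := hfix n
      have hq : q n ≠ 0 := (hqpos n).ne'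
      field_simp
      linarith [h]
    simp_rw [hkey]
    have h1 : Tendsto (fun n => (σw n) ^ 2 * ((∫ z, (φ (s n * z)) ^ 2 ∂stdG) / q n))
        atTop (𝓝 (L⁻¹ * L)) := hσw2.mul hB
    rw [inv_mul_cancel₀ hLpos.ne'] at h1
    have h2 := (tendsto_const_nhds (x := (1:ℝ)) (f := atTop)).sub h1
    simpa using h2
  · rw [← hLinv]
    exact hσw2
end

section
/- Let φ: ℝ → ℝ be continuous with φ(0) = 0, possessing a right derivative φ'(0⁺) and a left derivative φ'(0⁻) at 0, and satisfying |φ(y)| ≤ k|y| for all y and some k > 0. Then lim_{x → 0⁺} E[φ(√x Z)²]/x = (φ'(0⁺)² + φ'(0⁻)²)/2, where Z is a standard Gaussian random variable. -/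
open MeasureTheory ProbabilityTheory Real Filter Topology Set
open scoped ENNReal NNReal

lemma pdf_eq (x : ℝ) : gaussianPDFReal 0 1 x = (√(2*π))⁻¹ * rexp (-x^2/2) := by
  simp [gaussianPDFReal]

lemma integral_stdG (f : ℝ → ℝ) :
    ∫ z, f z ∂stdG = ∫ x, f x * gaussianPDFReal 0 1 x := by
  rw [stdG, gaussianReal_of_var_ne_zero _ one_ne_zero, gaussianPDF_def]
  rw [show (fun x => ENNReal.ofReal (gaussianPDFReal 0 1 x))
      = (fun x => ((gaussianPDFReal 0 1 x).toNNReal : ℝ≥0∞)) from rfl]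
  rw [integral_withDensity_eq_integral_smul
      (measurable_gaussianPDFReal 0 1).real_toNNReal f]
  congr 1; funext x
  simp [NNReal.smul_def, Real.coe_toNNReal _ (gaussianPDFReal_nonneg 0 1 x), mul_comm]

lemma integrable_stdG_iff (f : ℝ → ℝ) :
    Integrable f stdG ↔ Integrable (fun x => f x * gaussianPDFReal 0 1 x) := by
  rw [stdG, gaussianReal_of_var_ne_zero _ one_ne_zero, gaussianPDF_def]
  rw [show (fun x => ENNReal.ofReal (gaussianPDFReal 0 1 x))
      = (fun x => ((gaussianPDFReal 0 1 x).toNNReal : ℝ≥0∞)) from rfl]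
  rw [integrable_withDensity_iff_integrable_smul
      (measurable_gaussianPDFReal 0 1).real_toNNReal]
  constructor <;> intro h <;> refine h.congr (ae_of_all _ fun x => ?_) <;>
    simp [NNReal.smul_def, Real.coe_toNNReal _ (gaussianPDFReal_nonneg 0 1 x), mul_comm]

lemma integrable_sq_exp : Integrable (fun x : ℝ => x^2 * rexp (-x^2/2)) := by
  have h := integrable_rpow_mul_exp_neg_mul_sq (b := 1/2) one_half_pos
      (s := 2) (by norm_num)
  refine h.congr (ae_of_all _ fun x => ?_)
  show x ^ (2:ℝ) * rexp (-(1/2) * x^2) = x^2 * rexp (-x^2/2)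
  rw [rpow_two, show (-(1/2:ℝ)) * x^2 = -x^2/2 by ring]

lemma integrable_sq_pdf : Integrable (fun x : ℝ => x^2 * gaussianPDFReal 0 1 x) := by
  have h := (integrable_sq_exp.const_mul (√(2*π))⁻¹)
  refine h.congr (ae_of_all _ fun x => ?_)
  show (√(2*π))⁻¹ * (x^2 * rexp (-x^2/2)) = x^2 * gaussianPDFReal 0 1 x
  rw [pdf_eq]; ring

lemma integrable_sq_stdG : Integrable (fun z : ℝ => z^2) stdG := by
  rw [integrable_stdG_iff]; exact integrable_sq_pdf

lemma tendsto_neg_mul_exp : Tendsto (fun x : ℝ => -x * rexp (-x^2/2)) atTop (𝓝 0) := by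
  apply squeeze_zero_norm' (a := fun x : ℝ => x * rexp (-x)) ?_ ?_
  · filter_upwards [eventually_ge_atTop (2:ℝ)] with x hx
    have h0 : (0:ℝ) < x := by linarith
    have h1 : -x^2/2 ≤ -x := by nlinarith
    rw [norm_eq_abs, abs_mul, abs_neg, abs_of_pos h0, abs_of_pos (exp_pos _)]
    exact mul_le_mul_of_nonneg_left (exp_le_exp.2 h1) h0.le
  · simpa using Real.tendsto_pow_mul_exp_neg_atTop_nhds_zero 1

lemma exp_hasDeriv (x : ℝ) :
    HasDerivAt (fun x : ℝ => -x * rexp (-x^2/2)) ((x^2 - 1) * rexp (-x^2/2)) x := by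
  have h1 : HasDerivAt (fun y : ℝ => -y^2/2) (-x) x := by
    have h := ((hasDerivAt_pow 2 x).div_const 2).neg
    norm_num at h
    refine h.congr_of_eventuallyEq ?_
    filter_upwards with y
    simp only [Pi.neg_apply]; ring
  have h2 := h1.exp
  have h3 := ((hasDerivAt_id x).neg).mul h2
  rw [show ((x^2 - 1) * rexp (-x^2/2)) = -1 * rexp (-x ^ 2 / 2) + (-id) x * (rexp (-x ^ 2 / 2) * -x) by
    simp only [Pi.neg_apply, id_eq]; ring]
  exact h3

lemma integral_Ioi_sq_exp :
    ∫ x in Ioi (0:ℝ), x^2 * rexp (-x^2/2) = √(2*π)/2 := by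
  have hint_sq : IntegrableOn (fun x : ℝ => x^2 * rexp (-x^2/2)) (Ioi 0) :=
    integrable_sq_exp.integrableOn
  have hexp : Integrable (fun x : ℝ => rexp (-x^2/2)) := by
    have h := integrable_exp_neg_mul_sq (b := 1/2) one_half_pos
    refine h.congr (ae_of_all _ fun x => ?_)
    show rexp (-(1/2) * x^2) = rexp (-x^2/2)
    rw [show (-(1/2:ℝ)) * x^2 = -x^2/2 by ring]
  have hint_e : IntegrableOn (fun x : ℝ => rexp (-x^2/2)) (Ioi 0) := hexp.integrableOn
  have parts := integral_Ioi_of_hasDerivAt_of_tendsto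
    (f := fun x : ℝ => -x * rexp (-x^2/2))
    (f' := fun x : ℝ => (x^2 - 1) * rexp (-x^2/2)) (a := 0) (m := 0)
    (exp_hasDeriv 0).continuousAt.continuousWithinAt
    (fun x _ => exp_hasDeriv x)
    ((hint_sq.sub hint_e).congr (ae_of_all _ fun x => by
      simp only [Pi.sub_apply]; ring))
    tendsto_neg_mul_exp
  simp only [neg_zero, zero_mul, sub_zero, zero_sub, neg_neg, mul_zero, zero_mul] at parts
  have hsplit : ∫ x in Ioi (0:ℝ), ((x^2 - 1) * rexp (-x^2/2))
      = (∫ x in Ioi (0:ℝ), x^2 * rexp (-x^2/2)) - ∫ x in Ioi (0:ℝ), rexp (-x^2/2) := by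
    rw [← integral_sub hint_sq hint_e]
    apply setIntegral_congr_fun measurableSet_Ioi
    intro x _; ring
  have hg : ∫ x in Ioi (0:ℝ), rexp (-x^2/2) = √(2*π)/2 := by
    have h := integral_gaussian_Ioi (1/2)
    rw [show π / (1/2 : ℝ) = 2*π by ring] at h
    rw [← h]
    apply setIntegral_congr_fun measurableSet_Ioi
    intro x _; ring_nf
  rw [hsplit] at parts
  linarith [parts, hg]

lemma integral_Ioi_sq_pdf :
    ∫ x in Ioi (0:ℝ), x^2 * gaussianPDFReal 0 1 x = 1/2 := by
  have h : ∫ x in Ioi (0:ℝ), x^2 * gaussianPDFReal 0 1 x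
      = (√(2*π))⁻¹ * ∫ x in Ioi (0:ℝ), x^2 * rexp (-x^2/2) := by
    rw [← integral_const_mul]
    apply setIntegral_congr_fun measurableSet_Ioi
    intro x _
    simp only [pdf_eq]; ring
  rw [h, integral_Ioi_sq_exp]
  have hs : √(2*π) ≠ 0 := by
    positivity
  field_simp

lemma integral_Iic_sq_pdf :
    ∫ x in Iic (0:ℝ), x^2 * gaussianPDFReal 0 1 x = 1/2 := by
  have h := integral_comp_neg_Iic (0:ℝ) (fun x => x^2 * gaussianPDFReal 0 1 x)
  rw [neg_zero] at h
  rw [← integral_Ioi_sq_pdf, ← h]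
  apply setIntegral_congr_fun measurableSet_Iic
  intro x _
  simp only [neg_sq]
  congr 1
  simp [pdf_eq, neg_sq]

noncomputable def Lfun (dp dm : ℝ) : ℝ → ℝ := fun z => (if 0 ≤ z then dp * z else dm * z)^2

lemma Lfun_meas (dp dm : ℝ) : Measurable (Lfun dp dm) := by
  apply Measurable.pow_const
  exact Measurable.ite (measurableSet_le measurable_const measurable_id)
    (measurable_const.mul measurable_id) (measurable_const.mul measurable_id)

lemma Lfun_le (dp dm : ℝ) (z : ℝ) : |Lfun dp dm z| ≤ (dp^2 + dm^2) * z^2 := by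
  rw [Lfun, abs_of_nonneg (sq_nonneg _)]
  split
  · rw [mul_pow]; nlinarith [sq_nonneg z, sq_nonneg dm]
  · rw [mul_pow]; nlinarith [sq_nonneg z, sq_nonneg dp]

lemma integrable_Lfun_pdf (dp dm : ℝ) :
    Integrable (fun x => Lfun dp dm x * gaussianPDFReal 0 1 x) := by
  refine Integrable.mono (integrable_sq_pdf.const_mul (dp^2 + dm^2)) ?_ ?_
  · exact ((Lfun_meas dp dm).mul (measurable_gaussianPDFReal 0 1)).aestronglyMeasurable
  · refine ae_of_all _ fun x => ?_
    rw [norm_eq_abs, norm_eq_abs, abs_mul, ← mul_assoc]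
    have h1 := gaussianPDFReal_nonneg 0 1 x
    calc |Lfun dp dm x| * |gaussianPDFReal 0 1 x|
        ≤ ((dp^2 + dm^2) * x^2) * |gaussianPDFReal 0 1 x| := by
          apply mul_le_mul_of_nonneg_right (Lfun_le dp dm x) (abs_nonneg _)
      _ = (dp^2 + dm^2) * x^2 * gaussianPDFReal 0 1 x := by
          rw [abs_of_nonneg h1]
      _ ≤ _ := by rw [mul_assoc]; exact le_abs_self _

lemma integral_Lfun (dp dm : ℝ) : ∫ z, Lfun dp dm z ∂stdG = (dp^2 + dm^2)/2 := by
  rw [integral_stdG]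
  rw [← intervalIntegral.integral_Iic_add_Ioi (integrable_Lfun_pdf dp dm).integrableOn
      (integrable_Lfun_pdf dp dm).integrableOn]
  have h1 : ∫ x in Ioi (0:ℝ), Lfun dp dm x * gaussianPDFReal 0 1 x
      = dp^2 * ∫ x in Ioi (0:ℝ), x^2 * gaussianPDFReal 0 1 x := by
    rw [← integral_const_mul]
    apply setIntegral_congr_fun measurableSet_Ioi
    intro x hx
    have hx' : (0:ℝ) < x := hx
    simp only [Lfun, if_pos hx'.le, mul_pow]; ring
  have h2 : ∫ x in Iic (0:ℝ), Lfun dp dm x * gaussianPDFReal 0 1 x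
      = dm^2 * ∫ x in Iic (0:ℝ), x^2 * gaussianPDFReal 0 1 x := by
    rw [← integral_const_mul]
    apply setIntegral_congr_fun measurableSet_Iic
    intro x hx
    have hx' : x ≤ 0 := hx
    rcases lt_or_eq_of_le hx' with h | h
    · simp only [Lfun, if_neg (not_le.2 h), mul_pow]; ring
    · subst h; simp [Lfun]
  rw [h1, h2, integral_Ioi_sq_pdf, integral_Iic_sq_pdf]
  ring

/-- For a continuous `φ` with `φ(0) = 0`, one-sided derivatives `dp = φ'(0⁺)`, `dm = φ'(0⁻)`
at `0`, and linear growth `|φ(y)| ≤ k|y|`, one has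
`lim_{x → 0⁺} E[φ(√x Z)²]/x = (φ'(0⁺)² + φ'(0⁻)²)/2`. -/
theorem stmt14 (φ : ℝ → ℝ) (k dp dm : ℝ)
    (hφc : Continuous φ) (hφ0 : φ 0 = 0)
    (hdp : HasDerivWithinAt φ dp (Ici 0) 0)
    (hdm : HasDerivWithinAt φ dm (Iic 0) 0)
    (hk : 0 < k) (hbnd : ∀ y : ℝ, |φ y| ≤ k * |y|) :
    Tendsto (fun x => (∫ z, (φ (Real.sqrt x * z)) ^ 2 ∂stdG) / x) (𝓝[>] 0)
      (𝓝 ((dp ^ 2 + dm ^ 2) / 2)) := by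
  have hp : Tendsto (fun y => φ y / y) (𝓝[>] (0:ℝ)) (𝓝 dp) := by
    have h := hasDerivWithinAt_iff_tendsto_slope.mp hdp
    rw [Set.Ici_sdiff_left] at h
    refine h.congr fun y => ?_
    rw [slope_def_field]
    simp [hφ0]
  have hm : Tendsto (fun y => φ y / y) (𝓝[<] (0:ℝ)) (𝓝 dm) := by
    have h := hasDerivWithinAt_iff_tendsto_slope.mp hdm
    rw [Set.Iic_sdiff_right] at h
    refine h.congr fun y => ?_
    rw [slope_def_field]
    simp [hφ0]
  have key : ∀ z : ℝ, Tendsto (fun x => φ (√x * z)^2 / x) (𝓝[>] (0:ℝ))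
      (𝓝 (Lfun dp dm z)) := by
    intro z
    rcases lt_trichotomy z 0 with hz | hz | hz
    · have hmap : Tendsto (fun x => √x * z) (𝓝[>] (0:ℝ)) (𝓝[<] (0:ℝ)) := by
        apply tendsto_nhdsWithin_of_tendsto_nhds_of_eventually_within
        · have h0 : Tendsto (fun x : ℝ => √x * z) (𝓝 0) (𝓝 (√0 * z)) :=
            (Real.continuous_sqrt.tendsto 0).mul_const z
          simpa using h0.mono_left nhdsWithin_le_nhds
        · filter_upwards [self_mem_nhdsWithin] with x hx
          exact mul_neg_of_pos_of_neg (sqrt_pos.2 hx) hz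
      have h2 := ((hm.comp hmap).mul_const z).pow 2
      have hL : Lfun dp dm z = (dm * z)^2 := by
        simp [Lfun, if_neg (not_le.2 hz)]
      rw [hL]
      refine h2.congr' ?_
      filter_upwards [self_mem_nhdsWithin] with x hx
      have hsx : (0:ℝ) < √x := sqrt_pos.2 hx
      have hzz : z ≠ 0 := hz.ne
      have he : φ (√x * z) / (√x * z) * z = φ (√x * z) / √x := by
        field_simp
      simp only [Function.comp]
      rw [he, div_pow, sq_sqrt hx.le]
    · subst hz
      simp only [mul_zero, hφ0]
      have : Lfun dp dm 0 = 0 := by simp [Lfun]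
      rw [this]
      simp only [zero_pow, ne_eq, OfNat.ofNat_ne_zero, not_false_eq_true, zero_div]
      exact (tendsto_const_nhds : Tendsto (fun _ : ℝ => (0:ℝ)) (𝓝[>] (0:ℝ)) (𝓝 0))
    · have hmap : Tendsto (fun x => √x * z) (𝓝[>] (0:ℝ)) (𝓝[>] (0:ℝ)) := by
        apply tendsto_nhdsWithin_of_tendsto_nhds_of_eventually_within
        · have h0 : Tendsto (fun x : ℝ => √x * z) (𝓝 0) (𝓝 (√0 * z)) :=
            (Real.continuous_sqrt.tendsto 0).mul_const z
          simpa using h0.mono_left nhdsWithin_le_nhds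
        · filter_upwards [self_mem_nhdsWithin] with x hx
          exact mul_pos (sqrt_pos.2 hx) hz
      have h2 := ((hp.comp hmap).mul_const z).pow 2
      have hL : Lfun dp dm z = (dp * z)^2 := by
        simp [Lfun, if_pos hz.le]
      rw [hL]
      refine h2.congr' ?_
      filter_upwards [self_mem_nhdsWithin] with x hx
      have hsx : (0:ℝ) < √x := sqrt_pos.2 hx
      have hzz : z ≠ 0 := hz.ne'
      have he : φ (√x * z) / (√x * z) * z = φ (√x * z) / √x := by
        field_simp
      simp only [Function.comp]
      rw [he, div_pow, sq_sqrt hx.le]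
  have hmeas : ∀ᶠ x in 𝓝[>] (0:ℝ),
      AEStronglyMeasurable (fun z => φ (√x * z)^2 / x) stdG :=
    Eventually.of_forall fun x =>
      (((hφc.comp (continuous_const.mul continuous_id)).pow 2).div_const x).aestronglyMeasurable
  have hbound : ∀ᶠ x in 𝓝[>] (0:ℝ), ∀ᵐ z ∂stdG, ‖φ (√x * z)^2 / x‖ ≤ k^2 * z^2 := by
    filter_upwards [self_mem_nhdsWithin] with x hx
    refine ae_of_all _ fun z => ?_
    have hx' : (0:ℝ) < x := hx
    have h1 : |φ (√x * z)| ≤ k * (√x * |z|) := by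
      have h := hbnd (√x * z)
      rwa [abs_mul, abs_of_nonneg (sqrt_nonneg x)] at h
    have h2 : φ (√x * z)^2 ≤ k^2 * x * z^2 := by
      have h3 : |φ (√x * z)|^2 ≤ (k * (√x * |z|))^2 :=
        pow_le_pow_left₀ (abs_nonneg _) h1 2
      calc φ (√x * z)^2 = |φ (√x * z)|^2 := (sq_abs _).symm
        _ ≤ (k * (√x * |z|))^2 := h3
        _ = k^2 * x * z^2 := by
            rw [mul_pow, mul_pow, sq_sqrt hx'.le, sq_abs]; ring
    rw [norm_eq_abs, abs_div, abs_of_nonneg (sq_nonneg _), abs_of_pos hx', div_le_iff₀ hx']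
    nlinarith [h2]
  have hBint : Integrable (fun z : ℝ => k^2 * z^2) stdG := integrable_sq_stdG.const_mul _
  have hlim : ∀ᵐ z ∂stdG, Tendsto (fun x => φ (√x * z)^2 / x) (𝓝[>] (0:ℝ))
      (𝓝 (Lfun dp dm z)) := ae_of_all _ key
  have main := tendsto_integral_filter_of_dominated_convergence (μ := stdG)
    (fun z => k^2 * z^2) hmeas hbound hBint hlim
  rw [integral_Lfun] at main
  refine main.congr fun x => ?_
  rw [integral_div]
end
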